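/- Integrals of the degenerate Neumann system: at every point (x,y) ∈ ℝ^{n+1} × ℝ^{n+1} with ⟨x,x⟩ = 1 and ⟨x,y⟩ = 0, the Dirac bracket of the Neumann Hamiltonian H with each of the functions F_σ (σ = 0,…,ℓ) vanishes, {F_σ, H}(x,y) = 0, and likewise {L_{ik}, H}(x,y) = 0 for all indices i, k lying in the same index set I_σ. -/

import Mathlib

noncomputable section

/-- The canonical Poisson bracket on `T*ℝ^N = ℝ^N × ℝ^N`:
`[f,g] = ∑ ν (∂f/∂x_ν · ∂g/∂y_ν − ∂f/∂y_ν · ∂g/∂x_ν)`. -/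
def canPB {N : ℕ} (f g : (Fin N → ℝ) × (Fin N → ℝ) → ℝ)
    (p : (Fin N → ℝ) × (Fin N → ℝ)) : ℝ :=
  ∑ i : Fin N,
    ((fderiv ℝ f p) ((Pi.single i 1 : Fin N → ℝ), 0) *
        (fderiv ℝ g p) (0, (Pi.single i 1 : Fin N → ℝ))
      - (fderiv ℝ f p) (0, (Pi.single i 1 : Fin N → ℝ)) *
        (fderiv ℝ g p) ((Pi.single i 1 : Fin N → ℝ), 0))

/-- The constraint function `C1(x,y) = ⟨x,x⟩`. -/
def C1fun {N : ℕ} (p : (Fin N → ℝ) × (Fin N → ℝ)) : ℝ := ∑ ν, p.1 ν * p.1 ν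

/-- The constraint function `C2(x,y) = ⟨x,y⟩`. -/
def C2fun {N : ℕ} (p : (Fin N → ℝ) × (Fin N → ℝ)) : ℝ := ∑ ν, p.1 ν * p.2 ν

/-- The Dirac bracket
`{f,g} = [f,g] + (1/(2C1))·[f,C1]·[C2,g] − (1/(2C1))·[f,C2]·[C1,g]`. -/
def diracPB {N : ℕ} (f g : (Fin N → ℝ) × (Fin N → ℝ) → ℝ)
    (p : (Fin N → ℝ) × (Fin N → ℝ)) : ℝ :=
  canPB f g p + (1 / (2 * C1fun p)) * canPB f C1fun p * canPB C2fun g p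
    - (1 / (2 * C1fun p)) * canPB f C2fun p * canPB C1fun g p

open scoped Classical

/-- The angular momentum component `L_{νκ}(x,y) = x_ν y_κ − x_κ y_ν`. -/
def Lfun {N : ℕ} (ν κ : Fin N) (p : (Fin N → ℝ) × (Fin N → ℝ)) : ℝ :=
  p.1 ν * p.2 κ - p.1 κ * p.2 ν

/-- The integral `F_σ = ∑_{i∈I_σ} x_i² + ∑_{τ≠σ} ∑_{k∈I_σ} ∑_{l∈I_τ} L_{kl}²/(b_σ − b_τ)`
of the degenerate Neumann system, where `I_σ = {ν : a_ν = b_σ}`. -/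
def Fint {n ℓ : ℕ} (a : Fin (n + 1) → ℝ) (b : Fin (ℓ + 1) → ℝ) (σ : Fin (ℓ + 1))
    (p : (Fin (n + 1) → ℝ) × (Fin (n + 1) → ℝ)) : ℝ :=
  (∑ i : Fin (n + 1), if a i = b σ then (p.1 i) ^ 2 else 0)
    + ∑ τ : Fin (ℓ + 1), if τ ≠ σ then
        ∑ k : Fin (n + 1), ∑ l : Fin (n + 1),
          (if a k = b σ ∧ a l = b τ then (Lfun k l p) ^ 2 / (b σ - b τ) else 0)
      else 0

/-- The Neumann Hamiltonian `H(x,y) = ½⟨y,y⟩ + ½ ∑_ν a_ν x_ν²`. -/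
def neumannH {n : ℕ} (a : Fin (n + 1) → ℝ)
    (p : (Fin (n + 1) → ℝ) × (Fin (n + 1) → ℝ)) : ℝ :=
  (1 / 2) * (∑ ν, (p.2 ν) ^ 2) + (1 / 2) * ∑ ν, a ν * (p.1 ν) ^ 2

variable {N : ℕ}
abbrev EE (N : ℕ) := (Fin N → ℝ) × (Fin N → ℝ)

def φx (i : Fin N) : EE N →L[ℝ] ℝ :=
  (ContinuousLinearMap.proj i).comp (ContinuousLinearMap.fst ℝ _ _)
def φy (i : Fin N) : EE N →L[ℝ] ℝ :=
  (ContinuousLinearMap.proj i).comp (ContinuousLinearMap.snd ℝ _ _)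

lemma hX (i : Fin N) (p : EE N) : HasFDerivAt (fun q : EE N => q.1 i) (φx i) p :=
  (φx i).hasFDerivAt
lemma hY (i : Fin N) (p : EE N) : HasFDerivAt (fun q : EE N => q.2 i) (φy i) p :=
  (φy i).hasFDerivAt

lemma φx_apply (i : Fin N) (v : EE N) : φx i v = v.1 i := rfl
lemma φy_apply (i : Fin N) (v : EE N) : φy i v = v.2 i := rfl

def DL (k l : Fin N) (p : EE N) : EE N →L[ℝ] ℝ :=
  (p.1 k • φy l + p.2 l • φx k) - (p.1 l • φy k + p.2 k • φx l)

lemma hasFDerivAt_L (k l : Fin N) (p : EE N) : HasFDerivAt (Lfun k l) (DL k l p) p := by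
  have := ((hX k p).mul (hY l p)).sub ((hX l p).mul (hY k p))
  exact this

lemma DL_apply (k l : Fin N) (p v : EE N) :
    DL k l p v = p.1 k * v.2 l + p.2 l * v.1 k - (p.1 l * v.2 k + p.2 k * v.1 l) := by
  simp [DL, φx_apply, φy_apply]

lemma hasFDerivAt_sq {N : ℕ} {f : EE N → ℝ} {D : EE N →L[ℝ] ℝ} {p : EE N}
    (hf : HasFDerivAt f D p) :
    HasFDerivAt (fun q => f q ^ 2) (f p • D + f p • D) p := by
  simp only [pow_two]; exact hf.mul hf

def pbD {N : ℕ} (D D' : EE N →L[ℝ] ℝ) : ℝ :=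
  ∑ i : Fin N, (D ((Pi.single i 1 : Fin N → ℝ), 0) * D' (0, (Pi.single i 1 : Fin N → ℝ))
    - D (0, (Pi.single i 1 : Fin N → ℝ)) * D' ((Pi.single i 1 : Fin N → ℝ), 0))

lemma canPB_eq {N : ℕ} {f g : EE N → ℝ} {D D' : EE N →L[ℝ] ℝ} {p : EE N}
    (hf : HasFDerivAt f D p) (hg : HasFDerivAt g D' p) : canPB f g p = pbD D D' := by
  unfold canPB pbD
  rw [hf.fderiv, hg.fderiv]

lemma pbD_add (D₁ D₂ D' : EE N →L[ℝ] ℝ) : pbD (D₁ + D₂) D' = pbD D₁ D' + pbD D₂ D' := by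
  unfold pbD
  rw [← Finset.sum_add_distrib]
  refine Finset.sum_congr rfl fun i _ => ?_
  simp [ContinuousLinearMap.add_apply]; ring

lemma pbD_zero (D' : EE N →L[ℝ] ℝ) : pbD 0 D' = 0 := by simp [pbD]

lemma pbD_smul (c : ℝ) (D D' : EE N →L[ℝ] ℝ) : pbD (c • D) D' = c * pbD D D' := by
  unfold pbD
  rw [Finset.mul_sum]
  refine Finset.sum_congr rfl fun i _ => ?_
  simp [ContinuousLinearMap.smul_apply]; ring

lemma pbD_sum {ι : Type*} (s : Finset ι) (D : ι → (EE N →L[ℝ] ℝ)) (D' : EE N →L[ℝ] ℝ) :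
    pbD (∑ i ∈ s, D i) D' = ∑ i ∈ s, pbD (D i) D' := by
  unfold pbD
  rw [Finset.sum_comm]
  refine Finset.sum_congr rfl fun i _ => ?_
  simp [ContinuousLinearMap.sum_apply, Finset.sum_mul, Finset.sum_sub_distrib]

lemma pbD_ite (c : Prop) [Decidable c] (D D' : EE N →L[ℝ] ℝ) :
    pbD (if c then D else 0) D' = if c then pbD D D' else 0 := by
  split_ifs <;> simp [pbD_zero]

lemma pbD_phix (i : Fin N) (D' : EE N →L[ℝ] ℝ) :
    pbD (φx i) D' = D' (0, (Pi.single i 1 : Fin N → ℝ)) := by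
  unfold pbD
  simp [φx_apply, Pi.single_apply, ite_mul, Finset.sum_ite_eq, Finset.sum_ite_eq']

lemma pbD_DL (k l : Fin N) (p : EE N) (D' : EE N →L[ℝ] ℝ) :
    pbD (DL k l p) D' =
      p.2 l * D' (0, (Pi.single k 1 : Fin N → ℝ)) - p.2 k * D' (0, (Pi.single l 1 : Fin N → ℝ))
      - p.1 k * D' ((Pi.single l 1 : Fin N → ℝ), 0)
      + p.1 l * D' ((Pi.single k 1 : Fin N → ℝ), 0) := by
  unfold pbD
  simp only [DL_apply]
  simp [Pi.single_apply, ite_mul, mul_ite, sub_mul, mul_comm,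
    Finset.sum_sub_distrib, Finset.sum_ite_eq, Finset.sum_ite_eq']
  ring

lemma exD_H {n : ℕ} (a : Fin (n + 1) → ℝ) (p : EE (n + 1)) :
    ∃ D : EE (n + 1) →L[ℝ] ℝ, HasFDerivAt (neumannH a) D p ∧
      (∀ i, D ((Pi.single i 1 : Fin (n+1) → ℝ), 0) = a i * p.1 i) ∧
      (∀ i, D (0, (Pi.single i 1 : Fin (n+1) → ℝ)) = p.2 i) := by
  have h := ((HasFDerivAt.fun_sum (fun ν (_ : ν ∈ Finset.univ) => hasFDerivAt_sq (hY ν p))).const_mul ((1:ℝ)/2)).add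
      ((HasFDerivAt.fun_sum (fun ν (_ : ν ∈ Finset.univ) => (hasFDerivAt_sq (hX ν p)).const_mul (a ν))).const_mul ((1:ℝ)/2))
  refine ⟨_, h, fun i => ?_, fun i => ?_⟩ <;>
  · simp [φx_apply, φy_apply, Pi.single_apply]
    try simp [Finset.sum_add_distrib, Finset.sum_ite_eq', ite_mul, mul_ite, zero_mul, mul_zero]
    try ring

lemma exD_C1 {N : ℕ} (p : EE N) :
    ∃ D : EE N →L[ℝ] ℝ, HasFDerivAt (C1fun (N := N)) D p ∧
      (∀ i, D ((Pi.single i 1 : Fin N → ℝ), 0) = 2 * p.1 i) ∧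
      (∀ i, D (0, (Pi.single i 1 : Fin N → ℝ)) = 0) := by
  have h := HasFDerivAt.fun_sum (fun ν (_ : ν ∈ Finset.univ) => (hX ν p).mul (hX ν p))
  refine ⟨_, h, fun i => ?_, fun i => ?_⟩ <;>
  · simp [φx_apply, Pi.single_apply]
    try simp [Finset.sum_add_distrib, Finset.sum_ite_eq', ite_mul, mul_ite, zero_mul, mul_zero]
    try ring

lemma smul_two_eq {N : ℕ} (c : ℝ) (D : EE N →L[ℝ] ℝ) : c • D + c • D = (2 * c) • D := by
  rw [two_mul, add_smul]

lemma canPB_Fint {n ℓ : ℕ} (a : Fin (n+1) → ℝ) (b : Fin (ℓ+1) → ℝ) (σ : Fin (ℓ+1))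
    (p : EE (n+1)) {g : EE (n+1) → ℝ} {D' : EE (n+1) →L[ℝ] ℝ} (hg : HasFDerivAt g D' p) :
    canPB (Fint a b σ) g p =
      (∑ i, if a i = b σ then 2 * p.1 i * D' (0, (Pi.single i 1 : Fin (n+1) → ℝ)) else 0)
      + ∑ τ, if τ ≠ σ then (∑ k, ∑ l,
          if a k = b σ ∧ a l = b τ then
            (2 * Lfun k l p / (b σ - b τ)) * pbD (DL k l p) D' else 0) else 0 := by
  have hF : HasFDerivAt (Fint a b σ)
      ((∑ i, if a i = b σ then (2 * p.1 i) • φx i else (0 : EE (n+1) →L[ℝ] ℝ))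
        + ∑ τ, if τ ≠ σ then (∑ k, ∑ l,
            if a k = b σ ∧ a l = b τ then
              (2 * Lfun k l p / (b σ - b τ)) • DL k l p else (0 : EE (n+1) →L[ℝ] ℝ)) else 0) p := by
    unfold Fint
    apply HasFDerivAt.add
    · apply HasFDerivAt.fun_sum
      intro i _
      by_cases h : a i = b σ
      · simp only [if_pos h]
        exact smul_two_eq (p.1 i) (φx i) ▸ hasFDerivAt_sq (hX i p)
      · simp only [if_neg h]
        exact hasFDerivAt_const 0 p
    · apply HasFDerivAt.fun_sum
      intro τ _
      by_cases hτ : τ ≠ σ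
      · simp only [if_pos hτ]
        apply HasFDerivAt.fun_sum
        intro k _
        apply HasFDerivAt.fun_sum
        intro l _
        by_cases hc : a k = b σ ∧ a l = b τ
        · simp only [if_pos hc]
          have h1 := (hasFDerivAt_sq (hasFDerivAt_L k l p)).mul_const (b σ - b τ)⁻¹
          have e : (b σ - b τ)⁻¹ • (Lfun k l p • DL k l p + Lfun k l p • DL k l p)
              = (2 * Lfun k l p / (b σ - b τ)) • DL k l p := by
            rw [smul_two_eq, smul_smul]
            congr 1
            rw [div_eq_mul_inv]
            ring
          have h2 : HasFDerivAt (fun q => Lfun k l q ^ 2 / (b σ - b τ))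
              ((2 * Lfun k l p / (b σ - b τ)) • DL k l p) p := by
            simp only [div_eq_mul_inv]
            exact e ▸ h1
          exact h2
        · simp only [if_neg hc]
          exact hasFDerivAt_const 0 p
      · simp only [if_neg hτ]
        exact hasFDerivAt_const 0 p
  rw [canPB_eq hF hg, pbD_add, pbD_sum, pbD_sum]
  congr 1
  · refine Finset.sum_congr rfl fun i _ => ?_
    rw [pbD_ite, pbD_smul, pbD_phix]
  · refine Finset.sum_congr rfl fun τ _ => ?_
    rw [pbD_ite]
    split_ifs with hτ
    · rw [pbD_sum]
      refine Finset.sum_congr rfl fun k _ => ?_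
      rw [pbD_sum]
      refine Finset.sum_congr rfl fun l _ => ?_
      rw [pbD_ite, pbD_smul]
    · try rfl

/-- **Integrals of the degenerate Neumann system.**
At every point `(x,y)` with `⟨x,x⟩ = 1` and `⟨x,y⟩ = 0` the Dirac bracket of the Neumann
Hamiltonian with each `F_σ` vanishes, and likewise `{L_{ik}, H} = 0` whenever the indices
`i, k` lie in the same index set `I_σ`. -/

theorem stmt9 (n ℓ : ℕ) (a : Fin (n + 1) → ℝ) (b : Fin (ℓ + 1) → ℝ)
    (hb : StrictMono b)
    (hab : ∀ ν, ∃ σ, a ν = b σ) (hba : ∀ σ, ∃ ν, a ν = b σ)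
    (p : (Fin (n + 1) → ℝ) × (Fin (n + 1) → ℝ))
    (h1 : C1fun p = 1) (h2 : C2fun p = 0) :
    (∀ σ, diracPB (Fint a b σ) (neumannH a) p = 0) ∧
    (∀ σ : Fin (ℓ + 1), ∀ i k : Fin (n + 1), a i = b σ → a k = b σ →
      diracPB (Lfun i k) (neumannH a) p = 0) := by
  obtain ⟨DH, hDH, hDHx, hDHy⟩ := exD_H a p
  obtain ⟨DC1, hDC1, hDC1x, hDC1y⟩ := exD_C1 p
  -- basic brackets
  have hC1H : canPB C1fun (neumannH a) p = 0 := by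
    rw [canPB_eq hDC1 hDH]
    unfold pbD
    calc ∑ i, (DC1 ((Pi.single i 1 : Fin (n+1) → ℝ), 0) * DH (0, (Pi.single i 1 : Fin (n+1) → ℝ))
          - DC1 (0, (Pi.single i 1 : Fin (n+1) → ℝ)) * DH ((Pi.single i 1 : Fin (n+1) → ℝ), 0))
        = ∑ i, 2 * (p.1 i * p.2 i) := by
          refine Finset.sum_congr rfl fun i _ => ?_
          rw [hDC1x i, hDC1y i, hDHx i, hDHy i]; ring
      _ = 2 * C2fun p := by rw [C2fun, Finset.mul_sum]
      _ = 0 := by rw [h2]; ring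
  have hDLC1 : ∀ i k : Fin (n+1), pbD (DL i k p) DC1 = 0 := fun i k => by
    rw [pbD_DL, hDC1x, hDC1x, hDC1y, hDC1y]; ring
  have hLC1 : ∀ i k : Fin (n+1), canPB (Lfun i k) C1fun p = 0 := fun i k => by
    rw [canPB_eq (hasFDerivAt_L i k p) hDC1]; exact hDLC1 i k
  have hDLDH : ∀ i k : Fin (n+1), pbD (DL i k p) DH = p.1 i * p.1 k * (a i - a k) :=
    fun i k => by rw [pbD_DL, hDHx, hDHx, hDHy, hDHy]; ring
  have hLH : ∀ i k : Fin (n+1), canPB (Lfun i k) (neumannH a) p = p.1 i * p.1 k * (a i - a k) :=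
    fun i k => by rw [canPB_eq (hasFDerivAt_L i k p) hDH]; exact hDLDH i k
  constructor
  · -- the F_σ part
    intro σ
    have hFC1 : canPB (Fint a b σ) C1fun p = 0 := by
      rw [canPB_Fint a b σ p hDC1]
      simp [hDC1y, hDLC1]
    have hFH : canPB (Fint a b σ) (neumannH a) p = 0 := by
      rw [canPB_Fint a b σ p hDH]
      have hne : ∀ τ : Fin (ℓ+1), τ ≠ σ → b σ - b τ ≠ 0 := fun τ h =>
        sub_ne_zero.mpr fun e => h (hb.injective e).symm
      -- step A: simplify the inner terms
      have stepA : (∑ τ, if τ ≠ σ then (∑ k, ∑ l,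
            if a k = b σ ∧ a l = b τ then
              (2 * Lfun k l p / (b σ - b τ)) * pbD (DL k l p) DH else 0) else 0)
          = ∑ τ, if τ ≠ σ then (∑ k, ∑ l,
            if (a k = b σ ∧ a l = b τ) ∧ τ ≠ σ then
              2 * Lfun k l p * (p.1 k * p.1 l) else 0) else 0 := by
        refine Finset.sum_congr rfl fun τ _ => ?_
        by_cases hτ : τ ≠ σ
        · rw [if_pos hτ, if_pos hτ]
          refine Finset.sum_congr rfl fun k _ => Finset.sum_congr rfl fun l _ => ?_
          by_cases hc : a k = b σ ∧ a l = b τ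
          · rw [if_pos hc, if_pos ⟨hc, hτ⟩, hDLDH]
            obtain ⟨hk, hl⟩ := hc
            rw [hk, hl]
            have h0 := hne τ hτ
            field_simp
          · rw [if_neg hc, if_neg (fun h => hc h.1)]
        · rw [if_neg hτ, if_neg hτ]
      rw [stepA]
      -- step B: drop the outer ite and collapse the τ-sum
      have stepB : (∑ τ, if τ ≠ σ then (∑ k, ∑ l,
            if (a k = b σ ∧ a l = b τ) ∧ τ ≠ σ then
              2 * Lfun k l p * (p.1 k * p.1 l) else 0) else 0)
          = ∑ k, ∑ l, if a k = b σ ∧ ¬ (a l = b σ) then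
              2 * Lfun k l p * (p.1 k * p.1 l) else 0 := by
        have e1 : ∀ τ : Fin (ℓ+1), (if τ ≠ σ then (∑ k, ∑ l : Fin (n+1),
            if (a k = b σ ∧ a l = b τ) ∧ τ ≠ σ then
              2 * Lfun k l p * (p.1 k * p.1 l) else 0) else 0)
            = ∑ k, ∑ l : Fin (n+1), if (a k = b σ ∧ a l = b τ) ∧ τ ≠ σ then
              2 * Lfun k l p * (p.1 k * p.1 l) else 0 := by
          intro τ
          by_cases hτ : τ ≠ σ
          · rw [if_pos hτ]
          · rw [if_neg hτ]
            symm
            refine Finset.sum_eq_zero fun k _ => Finset.sum_eq_zero fun l _ => ?_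
            exact if_neg (by rintro ⟨_, h⟩; exact hτ h)
        rw [Finset.sum_congr rfl fun τ _ => e1 τ, Finset.sum_comm]
        refine Finset.sum_congr rfl fun k _ => ?_
        rw [Finset.sum_comm]
        refine Finset.sum_congr rfl fun l _ => ?_
        by_cases hk : a k = b σ
        · by_cases hl : a l = b σ
          · rw [if_neg (by simp [hl])]
            refine Finset.sum_eq_zero fun τ _ => ?_
            refine if_neg ?_
            rintro ⟨⟨_, hlτ⟩, hτ⟩
            exact hτ (hb.injective (hlτ.symm.trans hl))
          · obtain ⟨τ0, hτ0⟩ := hab l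
            have hτ0σ : τ0 ≠ σ := fun e => hl (e ▸ hτ0)
            rw [if_pos ⟨hk, hl⟩]
            have key : ∀ τ : Fin (ℓ+1), ((a k = b σ ∧ a l = b τ) ∧ τ ≠ σ) ↔ τ = τ0 := by
              intro τ
              constructor
              · rintro ⟨⟨_, h⟩, _⟩
                exact hb.injective (h.symm.trans hτ0)
              · rintro rfl
                exact ⟨⟨hk, hτ0⟩, hτ0σ⟩
            rw [Finset.sum_congr rfl fun τ _ => if_congr (key τ) rfl rfl]
            simp
        · rw [if_neg (by rintro ⟨h, _⟩; exact hk h)]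
          refine Finset.sum_eq_zero fun τ _ => ?_
          exact if_neg (by rintro ⟨⟨h, _⟩, _⟩; exact hk h)
      rw [stepB]
      -- step C: the final algebra
      have hA : (∑ k : Fin (n+1), if a k = b σ then p.1 k * p.1 k else 0)
          + (∑ k : Fin (n+1), if ¬ (a k = b σ) then p.1 k * p.1 k else 0) = 1 := by
        rw [← Finset.sum_add_distrib]
        have e : (∑ k : Fin (n+1), ((if a k = b σ then p.1 k * p.1 k else 0)
            + if ¬ (a k = b σ) then p.1 k * p.1 k else 0))
            = ∑ k : Fin (n+1), p.1 k * p.1 k :=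
          Finset.sum_congr rfl fun k _ => by by_cases h : a k = b σ <;> simp [h]
        rw [e]; exact h1
      have hB : (∑ k : Fin (n+1), if a k = b σ then p.1 k * p.2 k else 0)
          + (∑ k : Fin (n+1), if ¬ (a k = b σ) then p.1 k * p.2 k else 0) = 0 := by
        rw [← Finset.sum_add_distrib]
        have e : (∑ k : Fin (n+1), ((if a k = b σ then p.1 k * p.2 k else 0)
            + if ¬ (a k = b σ) then p.1 k * p.2 k else 0))
            = ∑ k : Fin (n+1), p.1 k * p.2 k :=
          Finset.sum_congr rfl fun k _ => by by_cases h : a k = b σ <;> simp [h]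
        rw [e]; exact h2
      have hfirst : (∑ i : Fin (n+1), if a i = b σ then
          2 * p.1 i * DH (0, (Pi.single i 1 : Fin (n+1) → ℝ)) else 0)
          = 2 * ∑ i : Fin (n+1), (if a i = b σ then p.1 i * p.2 i else 0) := by
        rw [Finset.mul_sum]
        refine Finset.sum_congr rfl fun i _ => ?_
        rw [hDHy]
        by_cases h : a i = b σ <;> simp [h] <;> ring
      have hsecond : (∑ k, ∑ l : Fin (n+1), if a k = b σ ∧ ¬ (a l = b σ) then
          2 * Lfun k l p * (p.1 k * p.1 l) else 0)
          = (2 * ∑ l : Fin (n+1), (if ¬ (a l = b σ) then p.1 l * p.2 l else 0))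
              * (∑ k : Fin (n+1), (if a k = b σ then p.1 k * p.1 k else 0))
            - (2 * ∑ l : Fin (n+1), (if ¬ (a l = b σ) then p.1 l * p.1 l else 0))
              * (∑ k : Fin (n+1), (if a k = b σ then p.1 k * p.2 k else 0)) := by
        have inner : ∀ k : Fin (n+1), (∑ l : Fin (n+1), if a k = b σ ∧ ¬ (a l = b σ) then
            2 * Lfun k l p * (p.1 k * p.1 l) else 0)
            = (2 * ∑ l : Fin (n+1), (if ¬ (a l = b σ) then p.1 l * p.2 l else 0))
                * (if a k = b σ then p.1 k * p.1 k else 0)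
              - (2 * ∑ l : Fin (n+1), (if ¬ (a l = b σ) then p.1 l * p.1 l else 0))
                * (if a k = b σ then p.1 k * p.2 k else 0) := by
          intro k
          by_cases hk : a k = b σ
          · rw [if_pos hk, if_pos hk]
            have e : ∀ l : Fin (n+1), (if a k = b σ ∧ ¬ (a l = b σ) then
                2 * Lfun k l p * (p.1 k * p.1 l) else 0)
                = 2 * (p.1 k * p.1 k) * (if ¬ (a l = b σ) then p.1 l * p.2 l else 0)
                  - 2 * (p.1 k * p.2 k) * (if ¬ (a l = b σ) then p.1 l * p.1 l else 0) := by
              intro l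
              by_cases hl : a l = b σ
              · simp [hk, hl]
              · simp only [hk, hl, true_and, not_false_iff, if_true, if_neg, if_pos]
                unfold Lfun
                ring
            rw [Finset.sum_congr rfl fun l _ => e l, Finset.sum_sub_distrib,
              ← Finset.mul_sum, ← Finset.mul_sum]
            ring
          · rw [if_neg hk, if_neg hk]
            rw [Finset.sum_eq_zero fun l _ => if_neg (fun h => hk h.1)]
            ring
        rw [Finset.sum_congr rfl fun k _ => inner k, Finset.sum_sub_distrib,
          ← Finset.mul_sum, ← Finset.mul_sum]
      rw [hfirst, hsecond]
      linear_combination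
        (2 * ∑ k : Fin (n+1), (if a k = b σ then p.1 k * p.1 k else 0)) * hB
        - (2 * ∑ k : Fin (n+1), (if a k = b σ then p.1 k * p.2 k else 0)) * hA
    unfold diracPB
    rw [hFH, hFC1, hC1H]
    ring
  · intro σ i k hi hk
    unfold diracPB
    rw [hLH i k, hLC1 i k, hC1H, hi, hk]
    ring
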